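/- Let μ = a_1 δ_{y_1} + a_2 δ_{y_2} with distinct y_1, y_2 ∈ ℝ and nonzero a_1, a_2 ∈ ℂ, set m_min = min(|a_1|, |a_2|), and let Y(ω) = F[μ](ω) + W(ω) be a measurement with |W(ω)| < σ for ω ∈ {−Ω, 0, Ω}. Let H be the 2×2 complex Hankel matrix with rows (Y(−Ω), Y(0)) and (Y(0), Y(Ω)), and let σ̂_2 = min_{x ∈ ℂ², ‖x‖_2 = 1} ‖H x‖_2 be its smallest singular value. If σ/m_min ≤ 1/2 and (4/Ω) · arcsin((σ/m_min)^{1/2}) ≤ |y_1 − y_2| ≤ π/Ω, then σ̂_2 > 2σ. -/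

import Mathlib

/-- **Singular value thresholding resolves two separated sources (Theorem 5.1, part 1).**
Let `μ = a₁ δ_{y₁} + a₂ δ_{y₂}` with distinct `y₁, y₂ ∈ ℝ`, nonzero amplitudes, and
`m_min = min(|a₁|, |a₂|)`, and let `Y(ω) = F[μ](ω) + W(ω)` with `|W(ω)| < σ` at
`ω ∈ {−Ω, 0, Ω}`.  Let `σ̂₂` be the smallest singular value of the `2×2` Hankel
matrix `H = [[Y(−Ω), Y(0)], [Y(0), Y(Ω)]]`, i.e. the infimum of `‖H x‖₂` over unit
vectors `x ∈ ℂ²`.  If `σ/m_min ≤ 1/2` and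
`(4/Ω) arcsin((σ/m_min)^{1/2}) ≤ |y₁ − y₂| ≤ π/Ω`, then `σ̂₂ > 2σ`. -/
lemma core_ineq (A B z₁ z₂ : ℂ) (hA : ‖A‖ = 1) (hB : ‖B‖ = 1) :
    (2 - ‖A + B‖) * (‖z₁‖ ^ 2 + ‖z₂‖ ^ 2)
      ≤ ‖z₁ + A * z₂‖ ^ 2 + ‖z₁ + B * z₂‖ ^ 2 := by
  have hnA : Complex.normSq A = 1 := by
    rw [← Complex.sq_norm, hA]; norm_num
  have hnB : Complex.normSq B = 1 := by
    rw [← Complex.sq_norm, hB]; norm_num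
  have e1 : ‖z₁ + A * z₂‖ ^ 2
      = ‖z₁‖ ^ 2 + ‖z₂‖ ^ 2 + 2 * (z₁ * (starRingEnd ℂ) (A * z₂)).re := by
    rw [Complex.sq_norm, Complex.sq_norm z₁, Complex.sq_norm z₂, Complex.normSq_add,
      Complex.normSq_mul, hnA, one_mul]
  have e2 : ‖z₁ + B * z₂‖ ^ 2
      = ‖z₁‖ ^ 2 + ‖z₂‖ ^ 2 + 2 * (z₁ * (starRingEnd ℂ) (B * z₂)).re := by
    rw [Complex.sq_norm, Complex.sq_norm z₁, Complex.sq_norm z₂, Complex.normSq_add,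
      Complex.normSq_mul, hnB, one_mul]
  have ecross : (z₁ * (starRingEnd ℂ) (A * z₂)).re + (z₁ * (starRingEnd ℂ) (B * z₂)).re
      = ((z₁ * (starRingEnd ℂ) z₂) * (starRingEnd ℂ) (A + B)).re := by
    rw [← Complex.add_re, map_add, map_mul, map_mul]; ring_nf
  have habs : ‖z₁ * (starRingEnd ℂ) z₂ * (starRingEnd ℂ) (A + B)‖
      = ‖z₁‖ * ‖z₂‖ * ‖A + B‖ := by
    rw [norm_mul, norm_mul, Complex.norm_conj, Complex.norm_conj]
  have hcr : -(‖A + B‖ * (‖z₁‖ * ‖z₂‖))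
      ≤ (z₁ * (starRingEnd ℂ) z₂ * (starRingEnd ℂ) (A + B)).re := by
    have h1 := Complex.abs_re_le_norm (z₁ * (starRingEnd ℂ) z₂ * (starRingEnd ℂ) (A + B))
    have h2 := (abs_le.mp h1).1
    rw [habs] at h2
    linarith
  have hd0 : 0 ≤ ‖A + B‖ := norm_nonneg _
  have hz1 : 0 ≤ ‖z₁‖ := norm_nonneg _
  have hz2 : 0 ≤ ‖z₂‖ := norm_nonneg _
  nlinarith [mul_nonneg hd0 (sq_nonneg (‖z₁‖ - ‖z₂‖))]

lemma cauchy2 (a b x₁ x₂ : ℂ) :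
    ‖a * x₁ + b * x₂‖ ^ 2
      ≤ (‖a‖ ^ 2 + ‖b‖ ^ 2) * (‖x₁‖ ^ 2 + ‖x₂‖ ^ 2) := by
  have h1 : ‖a * x₁ + b * x₂‖ ≤ ‖a‖ * ‖x₁‖ + ‖b‖ * ‖x₂‖ := by
    calc ‖a * x₁ + b * x₂‖ ≤ ‖a * x₁‖ + ‖b * x₂‖ :=
          norm_add_le _ _
      _ = _ := by rw [norm_mul, norm_mul]
  have h0 : 0 ≤ ‖a * x₁ + b * x₂‖ := norm_nonneg _
  nlinarith [sq_nonneg (‖a‖ * ‖x₂‖ - ‖b‖ * ‖x₁‖),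
    norm_nonneg a, norm_nonneg b, norm_nonneg x₁, norm_nonneg x₂]

lemma abs_one_add_exp (θ : ℝ) :
    ‖1 + Complex.exp (Complex.I * θ)‖ = 2 * |Real.cos (θ / 2)| := by
  have key : (1 : ℂ) + Complex.exp (Complex.I * θ)
      = Complex.exp (Complex.I * ((θ : ℂ) / 2)) * (2 * (Real.cos (θ / 2) : ℂ)) := by
    rw [Complex.ofReal_cos, Complex.cos]
    rw [show ((θ / 2 : ℝ) : ℂ) * Complex.I = Complex.I * ((θ : ℂ) / 2) by push_cast; ring,
      show -(((θ / 2 : ℝ) : ℂ)) * Complex.I = -(Complex.I * ((θ : ℂ) / 2)) by push_cast; ring]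
    have : Complex.exp (Complex.I * ((θ : ℂ) / 2)) *
        (2 * ((Complex.exp (Complex.I * ((θ : ℂ) / 2)) + Complex.exp (-(Complex.I * ((θ : ℂ) / 2)))) / 2))
        = Complex.exp (Complex.I * ((θ : ℂ) / 2)) * Complex.exp (Complex.I * ((θ : ℂ) / 2))
          + Complex.exp (Complex.I * ((θ : ℂ) / 2)) * Complex.exp (-(Complex.I * ((θ : ℂ) / 2))) := by
      ring
    rw [this, ← Complex.exp_add, ← Complex.exp_add]
    norm_num
    rw [show Complex.I * ((θ : ℂ) / 2) + Complex.I * ((θ : ℂ) / 2) = Complex.I * θ by ring]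
    ring
  rw [key, norm_mul, Complex.norm_exp]
  have h0 : (Complex.I * ((θ : ℂ) / 2)).re = 0 := by simp
  rw [h0, Real.exp_zero, one_mul]
  rw [show ((2 : ℂ) * (Real.cos (θ / 2) : ℂ)) = ((2 * Real.cos (θ / 2) : ℝ) : ℂ) by push_cast; ring]
  rw [Complex.norm_real, Real.norm_eq_abs, abs_mul]
  norm_num

set_option maxHeartbeats 1000000 in
theorem hankel_min_singular_value_two_sources
    (Ω σ : ℝ) (hΩ : 0 < Ω) (hσ : 0 < σ)
    (y₁ y₂ : ℝ) (hy : y₁ ≠ y₂)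
    (a₁ a₂ : ℂ) (ha₁ : a₁ ≠ 0) (ha₂ : a₂ ≠ 0)
    (mmin : ℝ) (hmmin : mmin = min ‖a₁‖ ‖a₂‖)
    (W : ℝ → ℂ) (hW : ∀ ω ∈ ({-Ω, 0, Ω} : Set ℝ), ‖W ω‖ < σ)
    (Y : ℝ → ℂ)
    (hY : ∀ ω ∈ ({-Ω, 0, Ω} : Set ℝ),
      Y ω = a₁ * Complex.exp (Complex.I * (y₁ : ℂ) * (ω : ℂ))
        + a₂ * Complex.exp (Complex.I * (y₂ : ℂ) * (ω : ℂ)) + W ω)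
    (σ₂ : ℝ)
    (hσ₂ : σ₂ = sInf {r : ℝ | ∃ x₁ x₂ : ℂ,
      ‖x₁‖ ^ 2 + ‖x₂‖ ^ 2 = 1 ∧
      r = Real.sqrt (‖Y (-Ω) * x₁ + Y 0 * x₂‖ ^ 2
        + ‖Y 0 * x₁ + Y Ω * x₂‖ ^ 2)})
    (hratio : σ / mmin ≤ 1 / 2)
    (hsep₁ : 4 / Ω * Real.arcsin (Real.sqrt (σ / mmin)) ≤ |y₁ - y₂|)
    (hsep₂ : |y₁ - y₂| ≤ Real.pi / Ω) :
    2 * σ < σ₂ := by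
  -- basic positivity
  have hm : 0 < mmin := by
    rw [hmmin]
    exact lt_min (norm_pos_iff.mpr ha₁) (norm_pos_iff.mpr ha₂)
  have hm1 : mmin ≤ ‖a₁‖ := hmmin ▸ min_le_left _ _
  have hm2 : mmin ≤ ‖a₂‖ := hmmin ▸ min_le_right _ _
  set ρ : ℝ := σ / mmin with hρ
  have hρpos : 0 < ρ := div_pos hσ hm
  have hρ1 : Real.sqrt ρ ≤ 1 := by
    rw [show (1:ℝ) = Real.sqrt 1 by simp]
    exact Real.sqrt_le_sqrt (by linarith)
  -- the angle
  set t2 : ℝ := |y₁ - y₂| * Ω / 4 with ht2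
  have ht2pos : 0 < t2 := by
    have : 0 < |y₁ - y₂| := abs_pos.mpr (sub_ne_zero.mpr hy)
    positivity
  have harc : Real.arcsin (Real.sqrt ρ) ≤ t2 := by
    have h := mul_le_mul_of_nonneg_right hsep₁ (le_of_lt (by positivity : (0:ℝ) < Ω / 4))
    rw [ht2]
    calc Real.arcsin (Real.sqrt ρ)
        = 4 / Ω * Real.arcsin (Real.sqrt ρ) * (Ω / 4) := by
          field_simp
      _ ≤ |y₁ - y₂| * (Ω / 4) := h
      _ = |y₁ - y₂| * Ω / 4 := by ring
  have ht2q : 2 * t2 ≤ Real.pi / 2 := by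
    have h := mul_le_mul_of_nonneg_right hsep₂ (le_of_lt hΩ)
    rw [div_mul_cancel₀ _ (ne_of_gt hΩ)] at h
    rw [ht2]; nlinarith
  have hsint2 : Real.sqrt ρ ≤ Real.sin t2 := by
    have hmem1 : Real.arcsin (Real.sqrt ρ) ∈ Set.Icc (-(Real.pi/2)) (Real.pi/2) :=
      Real.arcsin_mem_Icc _
    have hpi := Real.pi_pos
    have hmem2 : t2 ∈ Set.Icc (-(Real.pi/2)) (Real.pi/2) :=
      ⟨by linarith, by linarith⟩
    have := Real.strictMonoOn_sin.monotoneOn hmem1 hmem2 harc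
    rwa [Real.sin_arcsin (by linarith [Real.sqrt_nonneg ρ]) hρ1] at this
  -- exponentials
  set A1 : ℂ := Complex.exp (Complex.I * (y₁ : ℂ) * (Ω : ℂ)) with hA1
  set A2 : ℂ := Complex.exp (Complex.I * (y₂ : ℂ) * (Ω : ℂ)) with hA2
  have hA1ne : A1 ≠ 0 := Complex.exp_ne_zero _
  have hA2ne : A2 ≠ 0 := Complex.exp_ne_zero _
  have habsA1 : ‖A1‖ = 1 := by
    rw [hA1, Complex.norm_exp]; norm_num [Complex.mul_re]
  have habsA2 : ‖A2‖ = 1 := by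
    rw [hA2, Complex.norm_exp]; norm_num [Complex.mul_re]
  set G : ℂ := A1 * A2⁻¹ with hG
  have habsG : ‖G‖ = 1 := by
    rw [hG, norm_mul, norm_inv, habsA1, habsA2]; norm_num
  have hGexp : G = Complex.exp (Complex.I * (((y₁ - y₂) * Ω : ℝ) : ℂ)) := by
    rw [hG, hA1, hA2, ← Complex.exp_neg, ← Complex.exp_add]
    congr 1
    push_cast
    ring
  set δ : ℝ := ‖1 + G‖ with hδ
  have hδcos : δ = 2 * Real.cos (2 * t2) := by
    rw [hδ, hGexp, abs_one_add_exp]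
    congr 1
    rw [← Real.cos_abs]
    rw [show |(y₁ - y₂) * Ω / 2| = 2 * t2 by
      rw [abs_div, abs_mul, abs_of_pos hΩ, ht2]
      rw [abs_of_pos (by norm_num : (0:ℝ) < 2)]
      ring]
    rw [abs_of_nonneg (Real.cos_nonneg_of_mem_Icc ⟨by linarith [Real.pi_pos], by linarith⟩)]
  have hlam : 4 * ρ ≤ 2 - δ := by
    rw [hδcos, Real.cos_two_mul, Real.cos_sq']
    nlinarith [Real.sq_sqrt (le_of_lt hρpos), Real.sqrt_nonneg ρ]
  have hδnonneg : 0 ≤ δ := norm_nonneg _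
  -- Y values
  have hYm : Y (-Ω) = (a₁ * A1⁻¹ + a₂ * A2⁻¹) + W (-Ω) := by
    rw [hY (-Ω) (by simp)]
    have e1 : Complex.exp (Complex.I * (y₁ : ℂ) * ((-Ω : ℝ) : ℂ)) = A1⁻¹ := by
      rw [hA1, ← Complex.exp_neg]; congr 1; push_cast; ring
    have e2 : Complex.exp (Complex.I * (y₂ : ℂ) * ((-Ω : ℝ) : ℂ)) = A2⁻¹ := by
      rw [hA2, ← Complex.exp_neg]; congr 1; push_cast; ring
    rw [e1, e2]
  have hY0 : Y 0 = (a₁ + a₂) + W 0 := by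
    rw [hY 0 (by simp)]
    norm_num
  have hYp : Y Ω = (a₁ * A1 + a₂ * A2) + W Ω := by
    rw [hY Ω (by simp)]
  -- noise bound
  set c : ℝ := max (max (‖W (-Ω)‖) (‖W 0‖)) (‖W Ω‖) with hc
  have hcσ : c < σ := by
    rw [hc]
    exact max_lt (max_lt (hW _ (by simp)) (hW _ (by simp))) (hW _ (by simp))
  have hc0 : 0 ≤ c := le_trans (norm_nonneg _) (le_max_right _ _)
  have hcm : ‖W (-Ω)‖ ≤ c := le_trans (le_max_left _ _) (le_max_left _ _)
  have hc0' : ‖W 0‖ ≤ c := le_trans (le_max_right _ _) (le_max_left _ _)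
  have hcp : ‖W Ω‖ ≤ c := le_max_right _ _
  -- the uniform lower bound on elements of the set
  have key : ∀ r ∈ {r : ℝ | ∃ x₁ x₂ : ℂ,
      ‖x₁‖ ^ 2 + ‖x₂‖ ^ 2 = 1 ∧
      r = Real.sqrt (‖Y (-Ω) * x₁ + Y 0 * x₂‖ ^ 2
        + ‖Y 0 * x₁ + Y Ω * x₂‖ ^ 2)}, 4 * σ - 2 * c ≤ r := by
    rintro r ⟨x₁, x₂, hx, hr⟩
    set s : ℂ := x₁ + A1 * x₂ with hs
    set u : ℂ := x₁ + A2 * x₂ with hu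
    set w₁ : ℂ := a₁ * s with hw₁
    set w₂ : ℂ := a₂ * u with hw₂
    -- step 1
    have habsA12 : ‖A1 + A2‖ = δ := by
      rw [hδ, show A1 + A2 = A2 * (1 + G) by rw [hG]; field_simp; ring, norm_mul, habsA2, one_mul]
    have step1 : (2 - δ) * 1 ≤ ‖s‖ ^ 2 + ‖u‖ ^ 2 := by
      have := core_ineq A1 A2 x₁ x₂ habsA1 habsA2
      rw [habsA12, hx] at this
      exact this
    -- step 2
    have step2 : mmin ^ 2 * (‖s‖ ^ 2 + ‖u‖ ^ 2)
        ≤ ‖w₁‖ ^ 2 + ‖w₂‖ ^ 2 := by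
      rw [hw₁, hw₂, norm_mul, norm_mul, mul_pow, mul_pow]
      have h1 : mmin ^ 2 ≤ ‖a₁‖ ^ 2 := pow_le_pow_left₀ hm.le hm1 2
      have h2 : mmin ^ 2 ≤ ‖a₂‖ ^ 2 := pow_le_pow_left₀ hm.le hm2 2
      have g1 := mul_le_mul_of_nonneg_right h1 (sq_nonneg (‖s‖))
      have g2 := mul_le_mul_of_nonneg_right h2 (sq_nonneg (‖u‖))
      linarith
    -- step 3
    have habsG1 : ‖G + 1‖ = δ := by rw [hδ, add_comm]
    have step3 : (2 - δ) * (‖w₁‖ ^ 2 + ‖w₂‖ ^ 2)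
        ≤ ‖w₁ + G * w₂‖ ^ 2 + ‖w₁ + w₂‖ ^ 2 := by
      have := core_ineq G 1 w₁ w₂ habsG (by simp)
      rw [habsG1] at this
      simpa using this
    -- combining: the noiseless part has norm² ≥ (4σ)²
    have hlm : 4 * σ ≤ (2 - δ) * mmin := by
      have : 4 * ρ * mmin ≤ (2 - δ) * mmin :=
        mul_le_mul_of_nonneg_right hlam (le_of_lt hm)
      rw [hρ] at this
      calc 4 * σ = 4 * (σ / mmin) * mmin := by field_simp
        _ ≤ (2 - δ) * mmin := this
    have hnoiseless : (4 * σ) ^ 2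
        ≤ ‖w₁ + G * w₂‖ ^ 2 + ‖w₁ + w₂‖ ^ 2 := by
      have h2δ : 0 ≤ 2 - δ := by nlinarith
      have hchain : (2 - δ) * (mmin ^ 2 * ((2 - δ) * 1))
          ≤ ‖w₁ + G * w₂‖ ^ 2 + ‖w₁ + w₂‖ ^ 2 := by
        calc (2 - δ) * (mmin ^ 2 * ((2 - δ) * 1))
            ≤ (2 - δ) * (mmin ^ 2 * (‖s‖ ^ 2 + ‖u‖ ^ 2)) := by
              apply mul_le_mul_of_nonneg_left _ h2δ
              apply mul_le_mul_of_nonneg_left step1 (sq_nonneg _)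
          _ ≤ (2 - δ) * (‖w₁‖ ^ 2 + ‖w₂‖ ^ 2) :=
              mul_le_mul_of_nonneg_left step2 h2δ
          _ ≤ _ := step3
      have h4σ : (0:ℝ) ≤ 4 * σ := by linarith
      have : (4 * σ) ^ 2 ≤ (2 - δ) * (mmin ^ 2 * ((2 - δ) * 1)) := by
        calc (4 * σ) ^ 2 = (4 * σ) * (4 * σ) := by ring
          _ ≤ ((2 - δ) * mmin) * ((2 - δ) * mmin) := mul_self_le_mul_self h4σ hlm
          _ = (2 - δ) * (mmin ^ 2 * ((2 - δ) * 1)) := by ring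
      linarith
    -- identify the noiseless part with the Hankel action minus noise
    set e₁ : ℂ := W (-Ω) * x₁ + W 0 * x₂ with he₁
    set e₂ : ℂ := W 0 * x₁ + W Ω * x₂ with he₂
    have hid1 : Y (-Ω) * x₁ + Y 0 * x₂ = A1⁻¹ * (w₁ + G * w₂) + e₁ := by
      rw [hYm, hY0, he₁, hw₁, hw₂, hs, hu, hG]
      field_simp
      ring
    have hid2 : Y 0 * x₁ + Y Ω * x₂ = (w₁ + w₂) + e₂ := by
      rw [hY0, hYp, he₂, hw₁, hw₂, hs, hu]
      ring
    have habs1 : ‖A1⁻¹ * (w₁ + G * w₂)‖ = ‖w₁ + G * w₂‖ := by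
      rw [norm_mul, norm_inv, habsA1]; norm_num
    -- noise bound
    have hne1 : ‖e₁‖ ^ 2 ≤ 2 * c ^ 2 := by
      have := cauchy2 (W (-Ω)) (W 0) x₁ x₂
      rw [hx, mul_one] at this
      have q1 := pow_le_pow_left₀ (norm_nonneg (W (-Ω))) hcm 2
      have q2 := pow_le_pow_left₀ (norm_nonneg (W 0)) hc0' 2
      linarith
    have hne2 : ‖e₂‖ ^ 2 ≤ 2 * c ^ 2 := by
      have := cauchy2 (W 0) (W Ω) x₁ x₂
      rw [hx, mul_one] at this
      have q1 := pow_le_pow_left₀ (norm_nonneg (W 0)) hc0' 2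
      have q2 := pow_le_pow_left₀ (norm_nonneg (W Ω)) hcp 2
      linarith
    -- triangle inequality in ℂ²
    have htri : 4 * σ - 2 * c ≤ Real.sqrt (‖Y (-Ω) * x₁ + Y 0 * x₂‖ ^ 2
        + ‖Y 0 * x₁ + Y Ω * x₂‖ ^ 2) := by
      set P : EuclideanSpace ℂ (Fin 2) := WithLp.toLp 2 ![Y (-Ω) * x₁ + Y 0 * x₂, Y 0 * x₁ + Y Ω * x₂] with hP
      set Q : EuclideanSpace ℂ (Fin 2) := WithLp.toLp 2 ![A1⁻¹ * (w₁ + G * w₂), w₁ + w₂] with hQ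
      set Ev : EuclideanSpace ℂ (Fin 2) := WithLp.toLp 2 ![e₁, e₂] with hEv
      have hPQE : P = Q + Ev := by
        ext i
        fin_cases i
        · show (Y (-Ω) * x₁ + Y 0 * x₂) = A1⁻¹ * (w₁ + G * w₂) + e₁
          exact hid1
        · show (Y 0 * x₁ + Y Ω * x₂) = (w₁ + w₂) + e₂
          exact hid2
      have hnormP : ‖P‖ = Real.sqrt (‖Y (-Ω) * x₁ + Y 0 * x₂‖ ^ 2
          + ‖Y 0 * x₁ + Y Ω * x₂‖ ^ 2) := by
        rw [EuclideanSpace.norm_eq]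
        congr 1
        rw [Fin.sum_univ_two]
        simp [hP]
      have hnormQ : 4 * σ ≤ ‖Q‖ := by
        rw [EuclideanSpace.norm_eq]
        have : ‖Q 0‖ ^ 2 + ‖Q 1‖ ^ 2
            = ‖w₁ + G * w₂‖ ^ 2 + ‖w₁ + w₂‖ ^ 2 := by
          simp [hQ, habsA1]
        rw [Fin.sum_univ_two, this]
        rw [show 4 * σ = Real.sqrt ((4 * σ) ^ 2) from
          (Real.sqrt_sq (by linarith)).symm]
        exact Real.sqrt_le_sqrt hnoiseless
      have hnormE : ‖Ev‖ ≤ 2 * c := by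
        rw [EuclideanSpace.norm_eq, Fin.sum_univ_two]
        have : ‖Ev 0‖ ^ 2 + ‖Ev 1‖ ^ 2 = ‖e₁‖ ^ 2 + ‖e₂‖ ^ 2 := by
          simp [hEv]
        rw [this]
        rw [show 2 * c = Real.sqrt ((2 * c) ^ 2) from (Real.sqrt_sq (by linarith)).symm]
        apply Real.sqrt_le_sqrt
        have : (2 * c) ^ 2 = 2 * c ^ 2 + 2 * c ^ 2 := by ring
        linarith
      have : ‖Q‖ ≤ ‖P‖ + ‖Ev‖ := by
        calc ‖Q‖ = ‖P - Ev‖ := by rw [hPQE]; congr 1; abel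
          _ ≤ ‖P‖ + ‖Ev‖ := norm_sub_le _ _
      linarith [hnormP ▸ this]
    rw [hr]
    exact htri
  -- nonempty
  have hne : {r : ℝ | ∃ x₁ x₂ : ℂ,
      ‖x₁‖ ^ 2 + ‖x₂‖ ^ 2 = 1 ∧
      r = Real.sqrt (‖Y (-Ω) * x₁ + Y 0 * x₂‖ ^ 2
        + ‖Y 0 * x₁ + Y Ω * x₂‖ ^ 2)}.Nonempty := by
    refine ⟨Real.sqrt (‖Y (-Ω) * 1 + Y 0 * 0‖ ^ 2
        + ‖Y 0 * 1 + Y Ω * 0‖ ^ 2), 1, 0, ?_, rfl⟩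
    simp
  have hinf : 4 * σ - 2 * c ≤ σ₂ := by
    rw [hσ₂]
    exact le_csInf hne key
  linarith
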